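/- Let G be a finite simple graph with vertex set {v_1,...,v_n} and maximum degree r, and let q ≥ r+1. Then the number of proper q-colorings satisfies Z(q,G) = Π_{k=1}^n ( q − E_{G_k}[|C(N(v_k,G_{k-1}))|] ), where the k-th expectation is over a uniformly random proper q-coloring of G_k = G \ {v_1,...,v_k} and N(v_k,G_{k-1}) is the neighborhood of v_k in G_{k-1}. -/

import Mathlib

open Finset

/-- The finite set of proper `q`-colorings of the subgraph of `G` induced on the vertex
subset `S`, encoded as functions `V → Fin q` that are proper on `S` and take the junk
value `0` outside `S` (so that they biject with colorings of the induced subgraph). -/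
noncomputable def colSet {V : Type*} [Fintype V] (G : SimpleGraph V) (q : ℕ)
    (S : Finset V) : Finset (V → Fin q) := by
  classical
  exact (Finset.univ : Finset (V → Fin q)).filter
    (fun c => (∀ u ∈ S, ∀ w ∈ S, G.Adj u w → c u ≠ c w) ∧ ∀ x, x ∉ S → (c x : ℕ) = 0)

/-- `Z(q, G[S])`: the number of proper `q`-colorings of the subgraph induced on `S`. -/
noncomputable def Zcol {V : Type*} [Fintype V] (G : SimpleGraph V) (q : ℕ)
    (S : Finset V) : ℕ := (colSet G q S).card

/-- The expectation, over a uniformly random proper `q`-coloring `C` of the subgraph of `G`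
induced on `S`, of the number of distinct colors `|C(A)|` used on the vertex set `A`. -/
noncomputable def expColors {V : Type*} [Fintype V] (G : SimpleGraph V) (q : ℕ)
    (S A : Finset V) : ℝ := by
  classical exact (∑ c ∈ colSet G q S, ((A.image c).card : ℝ)) / (Zcol G q S : ℝ)

/-- The neighbors of `v` in the subgraph of `G` induced on `S`. -/
noncomputable def nbrIn {V : Type*} [Fintype V] (G : SimpleGraph V) (v : V)
    (S : Finset V) : Finset V := by
  classical exact S.filter (fun u => G.Adj v u)

/-- Given an enumeration `e : Fin n ≃ V` of the vertices, `delSet e m` is the vertex set of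
`G_m = G \ {v_1, …, v_m}`. -/
noncomputable def delSet {V : Type*} [Fintype V] {n : ℕ} (e : Fin n ≃ V) (m : ℕ) :
    Finset V := by
  classical exact Finset.univ \ (Finset.univ.filter (fun i : Fin n => (i : ℕ) < m)).image e

set_option linter.unusedSectionVars false

section aux
variable {V : Type*} [Fintype V] [DecidableEq V] (G : SimpleGraph V) (q : ℕ)

lemma mem_colSet_iff {S : Finset V} {c : V → Fin q} :
    c ∈ colSet G q S ↔ (∀ u ∈ S, ∀ w ∈ S, G.Adj u w → c u ≠ c w) ∧
      ∀ x, x ∉ S → (c x : ℕ) = 0 := by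
  classical
  simp [colSet]

lemma mem_nbrIn_iff {S : Finset V} {v u : V} :
    u ∈ nbrIn G v S ↔ u ∈ S ∧ G.Adj v u := by
  classical
  simp [nbrIn]

lemma step_card (S : Finset V) (v : V) (hv : v ∈ S) (hq0 : 0 < q) :
    Zcol G q S = ∑ c ∈ colSet G q (S.erase v),
      (q - ((nbrIn G v (S.erase v)).image c).card) := by
  classical
  set S' := S.erase v with hS'
  set z : Fin q := ⟨0, hq0⟩ with hz
  have hmap : ∀ c ∈ colSet G q S, Function.update c v z ∈ colSet G q S' := by
    intro c hc
    rw [mem_colSet_iff] at hc ⊢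
    obtain ⟨hp, hj⟩ := hc
    constructor
    · intro u hu w hw hadj
      have hu' : u ≠ v := (Finset.mem_erase.1 hu).1
      have hw' : w ≠ v := (Finset.mem_erase.1 hw).1
      rw [Function.update_of_ne hu', Function.update_of_ne hw']
      exact hp u ((Finset.mem_erase.1 hu).2) w ((Finset.mem_erase.1 hw).2) hadj
    · intro x hx
      by_cases hxv : x = v
      · subst hxv; simp [hz]
      · rw [Function.update_of_ne hxv]
        apply hj
        intro hxS
        exact hx (Finset.mem_erase.2 ⟨hxv, hxS⟩)
  rw [Zcol, Finset.card_eq_sum_card_fiberwise hmap]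
  apply Finset.sum_congr rfl
  intro c' hc'
  rw [mem_colSet_iff] at hc'
  obtain ⟨hp', hj'⟩ := hc'
  have hc'v : c' v = z := by
    have := hj' v (by simp [hS'])
    exact Fin.ext (by simpa [hz] using this)
  have hfib : (colSet G q S).filter (fun c => Function.update c v z = c')
      = (Finset.univ \ (nbrIn G v S').image c').image (fun a => Function.update c' v a) := by
    ext c
    simp only [Finset.mem_filter, Finset.mem_image, Finset.mem_sdiff, Finset.mem_univ,
      true_and]
    constructor
    · rintro ⟨hc, hcc'⟩
      rw [mem_colSet_iff] at hc
      obtain ⟨hp, hj⟩ := hc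
      refine ⟨c v, ?_, ?_⟩
      · rintro ⟨u, hu, huc⟩
        rw [mem_nbrIn_iff] at hu
        obtain ⟨huS', hadj⟩ := hu
        have huv : u ≠ v := (Finset.mem_erase.1 huS').1
        have : c' u = c u := by rw [← hcc', Function.update_of_ne huv]
        exact hp v hv u ((Finset.mem_erase.1 huS').2) hadj (by rw [← huc, this])
      · funext x
        by_cases hxv : x = v
        · subst hxv; simp
        · rw [Function.update_of_ne hxv, ← hcc', Function.update_of_ne hxv]
    · rintro ⟨a, ha, rfl⟩
      constructor
      · rw [mem_colSet_iff]
        constructor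
        · intro u hu w hw hadj
          by_cases huv : u = v
          · have hwv : w ≠ v := fun h => G.loopless.irrefl v (by rw [huv, h] at hadj; exact hadj)
            rw [huv, Function.update_self, Function.update_of_ne hwv]
            intro h
            exact ha ⟨w, (mem_nbrIn_iff G).2 ⟨Finset.mem_erase.2 ⟨hwv, hw⟩, huv ▸ hadj⟩, h.symm⟩
          · by_cases hwv : w = v
            · rw [hwv, Function.update_self, Function.update_of_ne huv]
              intro h
              exact ha ⟨u, (mem_nbrIn_iff G).2 ⟨Finset.mem_erase.2 ⟨huv, hu⟩, (hwv ▸ hadj).symm⟩, h⟩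
            · rw [Function.update_of_ne huv, Function.update_of_ne hwv]
              exact hp' u (Finset.mem_erase.2 ⟨huv, hu⟩) w (Finset.mem_erase.2 ⟨hwv, hw⟩) hadj
        · intro x hx
          have hxv : x ≠ v := fun h => hx (h ▸ hv)
          rw [Function.update_of_ne hxv]
          exact hj' x (fun hxS' => hx ((Finset.mem_erase.1 hxS').2))
      · funext x
        by_cases hxv : x = v
        · subst hxv; simp [hc'v]
        · simp [Function.update_of_ne hxv]
  rw [hfib, Finset.card_image_of_injective _ (fun a b hab => by
      have := congrFun hab v; simpa using this),
    Finset.card_sdiff_of_subset (Finset.subset_univ _), Finset.card_univ, Fintype.card_fin]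

lemma image_card_le_r (r : ℕ) (hdeg : ∀ v : V, (G.neighborSet v).ncard ≤ r)
    (S : Finset V) (v : V) (c : V → Fin q) :
    ((nbrIn G v S).image c).card ≤ r := by
  classical
  calc ((nbrIn G v S).image c).card ≤ (nbrIn G v S).card := Finset.card_image_le
    _ ≤ (G.neighborFinset v).card := by
        apply Finset.card_le_card
        intro u hu
        rw [mem_nbrIn_iff] at hu
        exact SimpleGraph.mem_neighborFinset G v u |>.2 hu.2
    _ ≤ r := by
        have := hdeg v
        rwa [Set.ncard_eq_toFinset_card', ← SimpleGraph.neighborFinset_def] at this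

lemma Zcol_pos (r : ℕ) (hdeg : ∀ v : V, (G.neighborSet v).ncard ≤ r) (hq : r + 1 ≤ q)
    (S : Finset V) : 0 < Zcol G q S := by
  classical
  have hq0 : 0 < q := lt_of_lt_of_le (Nat.succ_pos r) hq
  induction S using Finset.strongInduction with
  | _ S ih =>
    rcases S.eq_empty_or_nonempty with rfl | ⟨v, hv⟩
    · rw [Zcol, Finset.card_pos]
      exact ⟨fun _ => ⟨0, hq0⟩, (mem_colSet_iff G q).2 ⟨by simp, by simp⟩⟩
    · rw [step_card G q S v hv hq0]
      have hS' : S.erase v ⊂ S := Finset.erase_ssubset hv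
      have hne : (colSet G q (S.erase v)).Nonempty :=
        Finset.card_pos.1 (ih _ hS')
      obtain ⟨c, hc⟩ := hne
      apply Finset.sum_pos'
      · intro i _; exact Nat.zero_le _
      · refine ⟨c, hc, ?_⟩
        have := image_card_le_r G q r hdeg (S.erase v) v c
        omega

end aux

section aux2
variable {V : Type*} [Fintype V] [DecidableEq V] (G : SimpleGraph V) (q : ℕ)

lemma expColors_def (S A : Finset V) : expColors G q S A =
    (∑ c ∈ colSet G q S, ((A.image c).card : ℝ)) / (Zcol G q S : ℝ) := rfl

lemma Zcol_empty (hq0 : 0 < q) : Zcol G q (∅ : Finset V) = 1 := by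
  classical
  rw [Zcol]
  have : colSet G q (∅ : Finset V) = {fun _ => (⟨0, hq0⟩ : Fin q)} := by
    ext c
    rw [mem_colSet_iff, Finset.mem_singleton]
    constructor
    · rintro ⟨-, h⟩
      funext x
      exact Fin.ext (h x (by simp))
    · rintro rfl
      exact ⟨by simp, by simp⟩
  rw [this, Finset.card_singleton]

lemma step_real (r : ℕ) (hdeg : ∀ v : V, (G.neighborSet v).ncard ≤ r) (hq : r + 1 ≤ q)
    (S : Finset V) (v : V) (hv : v ∈ S) :
    (Zcol G q S : ℝ) = (Zcol G q (S.erase v) : ℝ) *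
      ((q : ℝ) - expColors G q (S.erase v) (nbrIn G v S)) := by
  classical
  have hq0 : 0 < q := lt_of_lt_of_le (Nat.succ_pos r) hq
  have hZ' : (0 : ℝ) < (Zcol G q (S.erase v) : ℝ) := by
    exact_mod_cast Zcol_pos G q r hdeg hq (S.erase v)
  have hN : nbrIn G v S = nbrIn G v (S.erase v) := by
    ext u
    simp only [mem_nbrIn_iff, Finset.mem_erase]
    constructor
    · rintro ⟨h1, h2⟩
      exact ⟨⟨fun h => G.loopless.irrefl v (h ▸ h2), h1⟩, h2⟩
    · rintro ⟨⟨-, h1⟩, h2⟩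
      exact ⟨h1, h2⟩
  rw [hN, step_card G q S v hv hq0, expColors_def, Nat.cast_sum]
  have h1 : ∀ c ∈ colSet G q (S.erase v),
      ((q - ((nbrIn G v (S.erase v)).image c).card : ℕ) : ℝ)
        = (q : ℝ) - (((nbrIn G v (S.erase v)).image c).card : ℝ) := by
    intro c _
    have := image_card_le_r G q r hdeg (S.erase v) v c
    exact_mod_cast Nat.cast_sub (by omega)
  rw [Finset.sum_congr rfl h1, Finset.sum_sub_distrib, Finset.sum_const, nsmul_eq_mul]
  rw [mul_sub, mul_div_cancel₀ _ (ne_of_gt hZ')]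
  rfl

end aux2

section aux3
variable {V : Type*} [Fintype V] [DecidableEq V] {n : ℕ} (e : Fin n ≃ V)

lemma mem_delSet_iff {m : ℕ} {x : V} :
    x ∈ delSet e m ↔ ∀ i : Fin n, (i : ℕ) < m → e i ≠ x := by
  classical
  simp only [delSet, Finset.mem_sdiff, Finset.mem_univ, true_and, Finset.mem_image,
    Finset.mem_filter]
  push_neg
  tauto

lemma delSet_zero : delSet e 0 = Finset.univ := by
  ext x
  simp [mem_delSet_iff]

lemma delSet_top : delSet e n = ∅ := by
  ext x
  simp only [mem_delSet_iff, Finset.notMem_empty, iff_false]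
  push_neg
  exact ⟨e.symm x, (e.symm x).isLt, e.apply_symm_apply x⟩

lemma mem_delSet_self {k : ℕ} (hk : k < n) : e ⟨k, hk⟩ ∈ delSet e k := by
  rw [mem_delSet_iff]
  intro i hi h
  have : i = ⟨k, hk⟩ := e.injective h
  subst this
  exact Nat.lt_irrefl k hi

lemma delSet_succ {k : ℕ} (hk : k < n) :
    delSet e (k + 1) = (delSet e k).erase (e ⟨k, hk⟩) := by
  ext x
  simp only [mem_delSet_iff, Finset.mem_erase]
  constructor
  · intro h
    refine ⟨fun hx => h ⟨k, hk⟩ (Nat.lt_succ_self k) hx.symm, fun i hi => h i (by omega)⟩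
  · rintro ⟨hx, h⟩ i hi
    rcases Nat.lt_or_ge (i : ℕ) k with h' | h'
    · exact h i h'
    · have : (i : ℕ) = k := by omega
      have : i = ⟨k, hk⟩ := Fin.ext this
      subst this
      exact fun he => hx he.symm

end aux3



/-- for a graph of maximum degree `r` and `q ≥ r+1`,
`Z(q, G) = ∏_{k=1}^n ( q − E_{G_k}[|C(N(v_k, G_{k-1}))|] )`. -/
theorem statement3 {V : Type*} [Fintype V] (G : SimpleGraph V) (q r : ℕ)
    (hdeg : ∀ v : V, (G.neighborSet v).ncard ≤ r) (hq : r + 1 ≤ q)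
    {n : ℕ} (e : Fin n ≃ V) :
    (Zcol G q Finset.univ : ℝ) =
      ∏ k : Fin n,
        ((q : ℝ) - expColors G q (delSet e ((k : ℕ) + 1)) (nbrIn G (e k) (delSet e (k : ℕ)))) := by
  classical
  have hq0 : 0 < q := lt_of_lt_of_le (Nat.succ_pos r) hq
  rcases Nat.eq_zero_or_pos n with hn | hn
  · subst hn
    haveI : IsEmpty V := Equiv.isEmpty e.symm
    rw [Finset.univ_eq_empty, Zcol_empty G q hq0]
    simp
  · have key : ∀ j, j ≤ n → (Zcol G q (delSet e (n - j)) : ℝ) =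
        ∏ k ∈ Finset.Ico (n - j) n, ((q : ℝ) - expColors G q (delSet e (k + 1))
          (nbrIn G (if h : k < n then e ⟨k, h⟩ else e ⟨0, hn⟩) (delSet e k))) := by
      intro j
      induction j with
      | zero => intro _; simp [delSet_top, Zcol_empty G q hq0]
      | succ j ih =>
        intro hj
        set m := n - (j + 1) with hmdef
        have hm : m < n := by omega
        have hm1 : n - j = m + 1 := by omega
        rw [Finset.prod_eq_prod_Ico_succ_bot hm]
        have hih := ih (by omega)
        rw [hm1] at hih
        have hstep := step_real G q r hdeg hq (delSet e m) (e ⟨m, hm⟩)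
          (mem_delSet_self e hm)
        rw [← delSet_succ e hm] at hstep
        rw [hstep, hih, dif_pos hm]
        ring
    have hkey := key n le_rfl
    rw [Nat.sub_self, delSet_zero] at hkey
    rw [hkey, ← Finset.range_eq_Ico,
      ← Fin.prod_univ_eq_prod_range (fun k => ((q : ℝ) - expColors G q (delSet e (k + 1))
        (nbrIn G (if h : k < n then e ⟨k, h⟩ else e ⟨0, hn⟩) (delSet e k)))) n]
    apply Finset.prod_congr rfl
    intro k _
    rw [dif_pos k.isLt, Fin.eta]
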